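/- Let N, K ≥ 1, let T = (S^{N−1}_ℂ)^K, and for 1 ≤ i ≤ N and c ∈ ℤ/Kℤ let a_{i,c} ∈ C(T, ℂ) be the coordinate function a_{i,c}(z_0,…,z_{K−1}) = (z_c)_i. Define matrices Z_1,…,Z_N ∈ M_K(C(T, ℂ)) (rows and columns indexed by ℤ/Kℤ) by (Z_i)_{c,d} = a_{i,c} if d = c+1 and (Z_i)_{c,d} = 0 otherwise. Then Σ_{i=1}^N Z_i Z_i^* = 1 = Σ_{i=1}^N Z_i^* Z_i, and for all index tuples (i_1,…,i_K), (j_1,…,j_K) ∈ {1,…,N}^K the product Z_{i_1}⋯Z_{i_K} commutes with Z_{j_1}⋯Z_{j_K} and with (Z_{j_1}⋯Z_{j_K})^*. (In other words, the Z_i satisfy the defining relations of the K-half-liberated complex sphere, giving a K×K matrix model.) -/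

import Mathlib

/-- The unit complex sphere `S^{N-1}_ℂ`, as a subtype of `Fin N → ℂ`. -/
abbrev Sph (N : ℕ) : Type := {z : Fin N → ℂ // ∑ i, ‖z i‖ ^ 2 = 1}

/-- The coordinate function `a_{i,c}(z₀,…,z_{K-1}) = (z_c)_i` on `T = (S^{N-1}_ℂ)^K`. -/
def aCoord (N K : ℕ) [NeZero K] (i : Fin N) (c : ZMod K) :
    ContinuousMap (ZMod K → Sph N) ℂ :=
  ⟨fun z => (z c).1 i,
    (continuous_apply i).comp (continuous_subtype_val.comp (continuous_apply c))⟩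

/-- The matrix `Z_i ∈ M_K(C(T,ℂ))` with `(Z_i)_{c,d} = a_{i,c}` if `d = c+1`
and `0` otherwise. -/
noncomputable def Zmat (N K : ℕ) [NeZero K] (i : Fin N) :
    Matrix (ZMod K) (ZMod K) (ContinuousMap (ZMod K → Sph N) ℂ) :=
  Matrix.of fun c d => if d = c + 1 then aCoord N K i c else 0

lemma sumA (N K : ℕ) [NeZero K] (c : ZMod K) :
    ∑ i : Fin N, aCoord N K i c * star (aCoord N K i c) = 1 := by
  ext z
  simp only [ContinuousMap.coe_sum, Finset.sum_apply, ContinuousMap.mul_apply,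
    ContinuousMap.star_apply, ContinuousMap.one_apply, aCoord, ContinuousMap.coe_mk,
    RCLike.star_def, Complex.mul_conj]
  have h := (z c).2
  have step : ∀ i : Fin N, ((Complex.normSq ((z c).1 i) : ℝ) : ℂ)
      = ((‖(z c).1 i‖ ^ 2 : ℝ) : ℂ) := by
    intro i
    rw [Complex.normSq_eq_norm_sq]
  rw [Finset.sum_congr rfl fun i _ => step i, ← Complex.ofReal_sum, h, Complex.ofReal_one]

/-- Partial product of coordinate functions. -/
noncomputable def Pfun (N K : ℕ) [NeZero K] : List (Fin N) → ZMod K → ContinuousMap (ZMod K → Sph N) ℂ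
  | [], _ => 1
  | i :: l, c => aCoord N K i c * Pfun N K l (c + 1)

lemma prod_eq (N K : ℕ) [NeZero K] (l : List (Fin N)) :
    (l.map (Zmat N K)).prod =
      Matrix.of fun c d => if d = c + (l.length : ZMod K) then Pfun N K l c else 0 := by
  induction l with
  | nil =>
      ext c d
      simp [Matrix.one_apply, Pfun, eq_comm]
  | cons i l ih =>
      ext c d
      simp only [List.map_cons, List.prod_cons, Matrix.mul_apply, ih, Zmat, Matrix.of_apply,
        ite_mul, zero_mul, Finset.sum_ite_eq', Finset.mem_univ, if_true, Pfun]
      have hc2 : c + 1 + (l.length : ZMod K) = c + (((i :: l).length : ℕ) : ZMod K) := by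
        push_cast [List.length_cons]; ring
      rw [mul_ite, mul_zero, hc2]

lemma prod_diag (N K : ℕ) [NeZero K] (idx : Fin K → Fin N) :
    (List.ofFn fun c => Zmat N K (idx c)).prod =
      Matrix.diagonal (fun c => Pfun N K (List.ofFn idx) c) := by
  have h : (List.ofFn fun c => Zmat N K (idx c)) = (List.ofFn idx).map (Zmat N K) := by
    rw [List.map_ofFn]; rfl
  rw [h, prod_eq]
  ext c d
  simp [Matrix.diagonal_apply, ZMod.natCast_self, eq_comm]

theorem stmt_9 (N K : ℕ) [NeZero K] (hN : 1 ≤ N) (hK : 1 ≤ K) :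
    (∑ i, Zmat N K i * star (Zmat N K i) = 1) ∧
    (∑ i, star (Zmat N K i) * Zmat N K i = 1) ∧
    (∀ idx jdx : Fin K → Fin N,
      Commute ((List.ofFn fun c => Zmat N K (idx c)).prod)
        ((List.ofFn fun c => Zmat N K (jdx c)).prod) ∧
      Commute ((List.ofFn fun c => Zmat N K (idx c)).prod)
        (star ((List.ofFn fun c => Zmat N K (jdx c)).prod))) := by
  refine ⟨?_, ?_, ?_⟩
  · refine Matrix.ext fun c d => ?_
    simp only [Matrix.sum_apply, Matrix.star_eq_conjTranspose, Matrix.mul_apply,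
      Matrix.conjTranspose_apply, Zmat, Matrix.of_apply, ite_mul, zero_mul, apply_ite (star : ContinuousMap (ZMod K → Sph N) ℂ → _), star_zero,
      mul_ite, mul_zero]
    simp only [Finset.sum_ite_eq', Finset.mem_univ, if_true]
    by_cases h : c = d
    · subst h
      simp [Matrix.one_apply, ← sumA N K c]
    · have h' : ¬ (d = c) := fun hh => h hh.symm
      have h'' : ¬ (c + 1 = d + 1) := fun hh => h (by simpa using hh)
      simp [Matrix.one_apply, h, h', h'']
  · refine Matrix.ext fun c d => ?_
    simp only [Matrix.sum_apply, Matrix.star_eq_conjTranspose, Matrix.mul_apply,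
      Matrix.conjTranspose_apply, Zmat, Matrix.of_apply, apply_ite (star : ContinuousMap (ZMod K → Sph N) ℂ → _), star_zero, ite_mul, zero_mul,
      mul_ite, mul_zero]
    have hcond : ∀ e : ZMod K, (c = e + 1) = (e = c - 1) := by
      intro e
      apply propext
      constructor
      · intro h; rw [h]; ring
      · intro h; rw [h]; ring
    have hcond2 : ∀ e : ZMod K, (d = e + 1) = (e = d - 1) := by
      intro e
      apply propext
      constructor
      · intro h; rw [h]; ring
      · intro h; rw [h]; ring
    simp only [hcond, hcond2]
    simp only [Finset.sum_ite_eq', Finset.mem_univ, if_true]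
    by_cases h : c = d
    · subst h
      rw [Matrix.one_apply_eq, ← sumA N K (c - 1)]
      exact Finset.sum_congr rfl fun i _ => by rw [if_pos rfl]; exact mul_comm _ _
    · have h' : ¬ (c - 1 = d - 1) := fun hh => h (by
        have := congrArg (· + 1) hh
        simpa using this)
      have h'' : ¬ (d - 1 = c - 1) := fun hh => h' hh.symm
      simp [Matrix.one_apply, h, h', h'']
  · intro idx jdx
    rw [prod_diag, prod_diag]
    constructor
    · unfold Commute SemiconjBy
      rw [Matrix.diagonal_mul_diagonal, Matrix.diagonal_mul_diagonal]
      exact congrArg _ (funext fun e => mul_comm _ _)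
    · rw [Matrix.star_eq_conjTranspose, Matrix.diagonal_conjTranspose]
      unfold Commute SemiconjBy
      rw [Matrix.diagonal_mul_diagonal, Matrix.diagonal_mul_diagonal]
      exact congrArg _ (funext fun e => mul_comm _ _)
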